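/- For every real $t$ and real $x$, $e^{-it\cos x} = \sum_{k=-\infty}^{\infty} (-i)^k J_k(t)\, e^{ikx}$, where $J_k$ denotes the Bessel function of the first kind of order $k$, and the series converges absolutely. -/

import Mathlib

/-- The Bessel function of the first kind of nonnegative integer order `k`:
`J_k(t) = ∑_{m=0}^∞ (-1)^m / (m! (m+k)!) (t/2)^{2m+k}`. -/
noncomputable def besselJnn (k : ℕ) (t : ℝ) : ℝ :=
  ∑' m : ℕ, ((-1 : ℝ) ^ m / ((m.factorial : ℝ) * ((m + k).factorial : ℝ))) * (t / 2) ^ (2 * m + k)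

/-- The Bessel function of the first kind of integer order, with `J_{-k} = (-1)^k J_k`. -/
noncomputable def besselJ (k : ℤ) (t : ℝ) : ℝ :=
  if 0 ≤ k then besselJnn k.natAbs t else (-1 : ℝ) ^ k.natAbs * besselJnn k.natAbs t

/-- Reindexing `ℕ × ℕ` by the difference `k = n - m` together with `min`. -/
def jaEquiv : (Σ _ : ℤ, ℕ) ≃ ℕ × ℕ where
  toFun p := if 0 ≤ p.1 then (p.2 + p.1.natAbs, p.2) else (p.2, p.2 + p.1.natAbs)
  invFun q := ⟨(q.1 : ℤ) - q.2, min q.1 q.2⟩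
  left_inv := by
    rintro ⟨k, m⟩
    by_cases h : 0 ≤ k
    · simp only [if_pos h]
      show (⟨((m + k.natAbs : ℕ) : ℤ) - (m : ℤ), min (m + k.natAbs) m⟩ : Σ _ : ℤ, ℕ) = ⟨k, m⟩
      rw [show ((m + k.natAbs : ℕ) : ℤ) - (m : ℤ) = k by omega,
        show min (m + k.natAbs) m = m by omega]
    · simp only [if_neg h]
      show (⟨((m : ℕ) : ℤ) - ((m + k.natAbs : ℕ) : ℤ), min m (m + k.natAbs)⟩ : Σ _ : ℤ, ℕ)
        = ⟨k, m⟩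
      rw [show ((m : ℕ) : ℤ) - ((m + k.natAbs : ℕ) : ℤ) = k by omega,
        show min m (m + k.natAbs) = m by omega]
  right_inv := by
    rintro ⟨n, m⟩
    dsimp only
    by_cases h : m ≤ n
    · rw [if_pos (by push_cast; omega)]
      simp only [Prod.mk.injEq]
      constructor <;> omega
    · rw [if_neg (by push_cast; omega)]
      simp only [Prod.mk.injEq]
      constructor <;> omega

lemma besselJnn_summable (k : ℕ) (t : ℝ) :
    Summable fun m : ℕ =>
      ((-1 : ℝ) ^ m / ((m.factorial : ℝ) * ((m + k).factorial : ℝ))) * (t / 2) ^ (2 * m + k) := by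
  apply Summable.of_norm
  have hg : Summable fun m : ℕ => |t / 2| ^ k * (((t / 2) ^ 2) ^ m / m.factorial) :=
    (Real.summable_pow_div_factorial ((t / 2) ^ 2)).mul_left _
  refine hg.of_nonneg_of_le (fun m => norm_nonneg _) fun m => ?_
  have hfacpos : (0 : ℝ) < (m.factorial : ℝ) * ((m + k).factorial : ℝ) := by positivity
  have h1 : ‖((-1 : ℝ) ^ m / ((m.factorial : ℝ) * ((m + k).factorial : ℝ))) * (t / 2) ^ (2 * m + k)‖
      = |t / 2| ^ (2 * m + k) / ((m.factorial : ℝ) * ((m + k).factorial : ℝ)) := by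
    rw [Real.norm_eq_abs, abs_mul, abs_div, abs_pow, abs_pow, abs_neg, abs_one, one_pow,
      abs_of_pos hfacpos]
    ring
  have h2 : |t / 2| ^ (2 * m + k) = |t / 2| ^ k * ((t / 2) ^ 2) ^ m := by
    rw [← sq_abs, ← pow_mul, ← pow_add, add_comm, mul_comm 2 m]
  rw [h1, h2, mul_div_assoc]
  gcongr
  exact_mod_cast Nat.le_mul_of_pos_right _ (m + k).factorial_pos

/-- The Jacobi–Anger expansion: for all real `t` and `x`,
`e^{-it cos x} = ∑_{k=-∞}^{∞} (-i)^k J_k(t) e^{ikx}`, with absolute convergence. -/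
theorem jacobi_anger (t x : ℝ) :
    HasSum (fun k : ℤ =>
        (-Complex.I) ^ k * ((besselJ k t : ℝ) : ℂ) * Complex.exp (Complex.I * (k : ℂ) * (x : ℂ)))
      (Complex.exp (-Complex.I * (t : ℂ) * ((Real.cos x : ℝ) : ℂ))) ∧
    Summable (fun k : ℤ =>
      ‖(-Complex.I) ^ k * ((besselJ k t : ℝ) : ℂ) *
        Complex.exp (Complex.I * (k : ℂ) * (x : ℂ))‖) := by
  classical
  set u : ℂ := -Complex.I * Complex.exp (Complex.I * x) with hu_def
  have hu : u ≠ 0 := by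
    simp [hu_def, Complex.exp_ne_zero, Complex.I_ne_zero]
  set z : ℂ := (t : ℂ) / 2 * u with hz_def
  set w : ℂ := -((t : ℂ) / 2) * u⁻¹ with hw_def
  set f : ℕ → ℂ := fun n => z ^ n / n.factorial with hf_def
  set g : ℕ → ℂ := fun m => w ^ m / m.factorial with hg_def
  have hf : HasSum f (Complex.exp z) := by
    rw [Complex.exp_eq_exp_ℂ]; exact NormedSpace.expSeries_div_hasSum_exp z
  have hg : HasSum g (Complex.exp w) := by
    rw [Complex.exp_eq_exp_ℂ]; exact NormedSpace.expSeries_div_hasSum_exp w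
  have hfn : Summable fun n : ℕ => ‖f n‖ := by
    simpa [hf_def, norm_div, norm_pow] using Real.summable_pow_div_factorial ‖z‖
  have hgn : Summable fun m : ℕ => ‖g m‖ := by
    simpa [hg_def, norm_div, norm_pow] using Real.summable_pow_div_factorial ‖w‖
  -- the value of the product of exponentials
  have huinv : u⁻¹ = Complex.I * Complex.exp (-(Complex.I * x)) := by
    rw [hu_def, mul_inv, ← Complex.exp_neg, inv_neg, Complex.inv_I, neg_neg]
  have h1 : Complex.exp (Complex.I * x) = Complex.cos x + Complex.sin x * Complex.I := by
    rw [mul_comm, Complex.exp_mul_I]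
  have h2 : Complex.exp (-(Complex.I * x)) = Complex.cos x - Complex.sin x * Complex.I := by
    have hxI : -(Complex.I * (x : ℂ)) = (-(x : ℂ)) * Complex.I := by ring
    rw [hxI, Complex.exp_mul_I, Complex.cos_neg, Complex.sin_neg]
    ring
  have hzw : Complex.exp z * Complex.exp w
      = Complex.exp (-Complex.I * (t : ℂ) * ((Real.cos x : ℝ) : ℂ)) := by
    rw [← Complex.exp_add]
    congr 1
    rw [hz_def, hw_def, huinv, hu_def, h1, h2, Complex.ofReal_cos]
    ring
  -- the double sum
  have hprod : HasSum (fun q : ℕ × ℕ => f q.1 * g q.2) (Complex.exp z * Complex.exp w) :=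
    hf.mul hg (summable_mul_of_summable_norm hfn hgn)
  have hsig : HasSum (fun p : Σ _ : ℤ, ℕ => f (jaEquiv p).1 * g (jaEquiv p).2)
      (Complex.exp z * Complex.exp w) :=
    (jaEquiv.hasSum_iff (f := fun q : ℕ × ℕ => f q.1 * g q.2)).mpr hprod
  -- fiberwise sums
  set c : ℕ → ℕ → ℝ := fun K m =>
    ((-1 : ℝ) ^ m / ((m.factorial : ℝ) * ((m + K).factorial : ℝ))) * (t / 2) ^ (2 * m + K)
    with hc_def
  clear_value u z w f g c
  have hcC : ∀ K : ℕ, HasSum (fun m => ((c K m : ℝ) : ℂ)) ((besselJnn K t : ℝ) : ℂ) := by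
    intro K
    rw [hc_def]
    exact Complex.hasSum_ofReal.mpr (besselJnn_summable K t).hasSum
  have hexpk : ∀ k : ℤ, Complex.exp (Complex.I * (k : ℂ) * (x : ℂ))
      = (Complex.exp (Complex.I * x)) ^ k := by
    intro k
    rw [← Complex.exp_int_mul]
    ring_nf
  have hfib : ∀ k : ℤ, HasSum (fun m : ℕ => f (jaEquiv ⟨k, m⟩).1 * g (jaEquiv ⟨k, m⟩).2)
      ((-Complex.I) ^ k * ((besselJ k t : ℝ) : ℂ) * Complex.exp (Complex.I * (k : ℂ) * (x : ℂ))) := by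
    intro k
    set K : ℕ := k.natAbs with hK_def
    have hcCast : ∀ m : ℕ, ((c K m : ℝ) : ℂ)
        = (-1 : ℂ) ^ m * ((t : ℂ) / 2) ^ (2 * m + K)
          / ((m.factorial : ℂ) * ((m + K).factorial : ℂ)) := by
      intro m
      simp only [hc_def]
      push_cast
      ring
    by_cases hk : 0 ≤ k
    · have hkK : (K : ℤ) = k := by omega
      have hterm : ∀ m : ℕ, f (jaEquiv ⟨k, m⟩).1 * g (jaEquiv ⟨k, m⟩).2
          = ((c K m : ℝ) : ℂ) * u ^ K := by
        intro m
        simp only [jaEquiv, Equiv.coe_fn_mk, if_pos hk, hf_def, hg_def, ← hK_def]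
        have hfac1 : ((m + K).factorial : ℂ) ≠ 0 := by exact_mod_cast (m + K).factorial_ne_zero
        have hfac2 : ((m).factorial : ℂ) ≠ 0 := by exact_mod_cast (m).factorial_ne_zero
        have hupow : u ^ (m + K) * (u⁻¹) ^ m = u ^ K := by
          rw [inv_pow, pow_add, mul_comm (u ^ m), mul_assoc,
            mul_inv_cancel₀ (pow_ne_zero _ hu), mul_one]
        have key : z ^ (m + K) * w ^ m
            = ((-1 : ℂ) ^ m * ((t : ℂ) / 2) ^ (2 * m + K)) * u ^ K := by
          have he : (m + K) + m = 2 * m + K := by omega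
          calc z ^ (m + K) * w ^ m
              = (((t : ℂ) / 2) ^ (m + K) * ((t : ℂ) / 2) ^ m) * ((-1 : ℂ) ^ m)
                * (u ^ (m + K) * (u⁻¹) ^ m) := by
                rw [hz_def, hw_def, mul_pow, mul_pow, neg_pow]; ring
            _ = ((-1 : ℂ) ^ m * ((t : ℂ) / 2) ^ (2 * m + K)) * u ^ K := by
                rw [← pow_add, he, hupow]; ring
        rw [div_mul_div_comm, key, hcCast m]
        ring
      have hval : (-Complex.I) ^ k * ((besselJ k t : ℝ) : ℂ)
            * Complex.exp (Complex.I * (k : ℂ) * (x : ℂ))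
          = ((besselJnn K t : ℝ) : ℂ) * u ^ K := by
        have hzp : (-Complex.I) ^ k = (-Complex.I) ^ K := by
          rw [← hkK, zpow_natCast]
        have hep : (Complex.exp (Complex.I * (x : ℂ))) ^ k
            = (Complex.exp (Complex.I * (x : ℂ))) ^ K := by
          rw [← hkK, zpow_natCast]
        rw [besselJ, if_pos hk, hexpk, hzp, hep, ← hK_def, hu_def, mul_pow]
        ring
      rw [funext hterm, hval]
      exact (hcC K).mul_right _
    · have hkK : (K : ℤ) = -k := by omega
      have hterm : ∀ m : ℕ, f (jaEquiv ⟨k, m⟩).1 * g (jaEquiv ⟨k, m⟩).2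
          = (-1 : ℂ) ^ K * ((c K m : ℝ) : ℂ) * (u⁻¹) ^ K := by
        intro m
        simp only [jaEquiv, Equiv.coe_fn_mk, if_neg hk, hf_def, hg_def, ← hK_def]
        have hfac1 : ((m + K).factorial : ℂ) ≠ 0 := by exact_mod_cast (m + K).factorial_ne_zero
        have hfac2 : ((m).factorial : ℂ) ≠ 0 := by exact_mod_cast (m).factorial_ne_zero
        have hupow : u ^ m * (u⁻¹) ^ (m + K) = (u⁻¹) ^ K := by
          rw [inv_pow, inv_pow, pow_add, mul_inv, ← mul_assoc,
            mul_inv_cancel₀ (pow_ne_zero _ hu), one_mul]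
        have key : z ^ m * w ^ (m + K)
            = (((-1 : ℂ) ^ K * (-1 : ℂ) ^ m) * ((t : ℂ) / 2) ^ (2 * m + K)) * (u⁻¹) ^ K := by
          have he : m + (m + K) = 2 * m + K := by omega
          calc z ^ m * w ^ (m + K)
              = (((t : ℂ) / 2) ^ m * ((t : ℂ) / 2) ^ (m + K)) * ((-1 : ℂ) ^ (m + K))
                * (u ^ m * (u⁻¹) ^ (m + K)) := by
                rw [hz_def, hw_def, mul_pow, mul_pow, neg_pow]; ring
            _ = (((-1 : ℂ) ^ K * (-1 : ℂ) ^ m) * ((t : ℂ) / 2) ^ (2 * m + K)) * (u⁻¹) ^ K := by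
                rw [← pow_add, he, hupow, pow_add]; ring
        rw [div_mul_div_comm, key, hcCast m]
        ring
      have hval : (-Complex.I) ^ k * ((besselJ k t : ℝ) : ℂ)
            * Complex.exp (Complex.I * (k : ℂ) * (x : ℂ))
          = (-1 : ℂ) ^ K * ((besselJnn K t : ℝ) : ℂ) * (u⁻¹) ^ K := by
        have huk : (-Complex.I) ^ k * (Complex.exp (Complex.I * (x : ℂ))) ^ k = u ^ k := by
          rw [hu_def, mul_zpow]
        have huK : u ^ k = (u⁻¹) ^ K := by
          rw [← zpow_natCast (u⁻¹) K, inv_zpow, ← zpow_neg, hkK, neg_neg]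
        rw [besselJ, if_neg hk, hexpk, ← hK_def]
        push_cast
        have hre : (-Complex.I) ^ k * ((-1 : ℂ) ^ K * ((besselJnn K t : ℝ) : ℂ))
              * (Complex.exp (Complex.I * (x : ℂ))) ^ k
            = ((-1 : ℂ) ^ K * ((besselJnn K t : ℝ) : ℂ))
              * ((-Complex.I) ^ k * (Complex.exp (Complex.I * (x : ℂ))) ^ k) := by
          ring
        rw [hre, huk, huK]
      rw [funext hterm, hval]
      exact ((hcC K).mul_left _).mul_right _
  have hHasSum : HasSum (fun k : ℤ =>
      (-Complex.I) ^ k * ((besselJ k t : ℝ) : ℂ) * Complex.exp (Complex.I * (k : ℂ) * (x : ℂ)))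
      (Complex.exp (-Complex.I * (t : ℂ) * ((Real.cos x : ℝ) : ℂ))) := by
    rw [← hzw]
    exact hsig.sigma fun k => hfib k
  refine ⟨hHasSum, ?_⟩
  -- absolute convergence
  have hnormeq : ∀ k : ℤ, ‖(-Complex.I) ^ k * ((besselJ k t : ℝ) : ℂ) *
      Complex.exp (Complex.I * (k : ℂ) * (x : ℂ))‖ = |besselJ k t| := by
    intro k
    rw [norm_mul, norm_mul, norm_zpow]
    simp [Complex.norm_exp, Complex.mul_re, Complex.mul_im]
  have hNsum : Summable fun p : Σ _ : ℤ, ℕ => ‖f (jaEquiv p).1 * g (jaEquiv p).2‖ := by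
    have h0 : Summable fun q : ℕ × ℕ => ‖f q.1 * g q.2‖ := by
      have h := hfn.mul_of_nonneg hgn (fun n => norm_nonneg _) (fun m => norm_nonneg _)
      exact h.congr fun q => (norm_mul _ _).symm
    exact (jaEquiv.summable_iff (f := fun q : ℕ × ℕ => ‖f q.1 * g q.2‖)).mpr h0
  have hFib : Summable fun k : ℤ => ∑' m : ℕ, ‖f (jaEquiv ⟨k, m⟩).1 * g (jaEquiv ⟨k, m⟩).2‖ :=
    hNsum.sigma
  refine Summable.of_nonneg_of_le (fun k => norm_nonneg _) (fun k => ?_) hFib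
  calc ‖(-Complex.I) ^ k * ((besselJ k t : ℝ) : ℂ) *
        Complex.exp (Complex.I * (k : ℂ) * (x : ℂ))‖
      = ‖∑' m : ℕ, f (jaEquiv ⟨k, m⟩).1 * g (jaEquiv ⟨k, m⟩).2‖ := by rw [(hfib k).tsum_eq]
    _ ≤ ∑' m : ℕ, ‖f (jaEquiv ⟨k, m⟩).1 * g (jaEquiv ⟨k, m⟩).2‖ :=
        norm_tsum_le_tsum_norm (hNsum.sigma_factor k)
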